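/- Let n be an odd positive integer. Then every ideal of the quotient ring R[Y] ⧸ ⟨Yⁿ - 1⟩ is principal; that is, the ring ((ZMod 2)[X] ⧸ ⟨X³ - X⟩)[Y] ⧸ ⟨Yⁿ - 1⟩ is a principal ideal ring. -/

import Mathlib

open Polynomial

noncomputable section

/-- The ring `R = F₂ + uF₂ + u²F₂` with `u³ = u`, realized as `(ZMod 2)[X] ⧸ ⟨X³ - X⟩`. -/
abbrev R : Type := Polynomial (ZMod 2) ⧸ Ideal.span ({X ^ 3 - X} : Set (Polynomial (ZMod 2)))

instance R.instCommRing : CommRing R := Ideal.Quotient.commRing _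

/-- Property: every ideal is generated by an idempotent element. -/
def IdemSpan (C : Type*) [CommRing C] : Prop :=
  ∀ I : Ideal C, ∃ e, e * e = e ∧ I = Ideal.span {e}

/-- If `v² = 0` and every ideal of `D ⧸ (v)` is generated by an idempotent, then `D` is a
principal ideal ring. -/
theorem main_pir {D : Type*} [CommRing D] (v : D) (hv : v * v = 0)
    (H : IdemSpan (D ⧸ Ideal.span {v})) : IsPrincipalIdealRing D := by
  constructor
  intro I
  set π := Ideal.Quotient.mk (Ideal.span {v}) with hπdef
  have hπv : π v = 0 := Ideal.Quotient.eq_zero_iff_mem.mpr (Ideal.mem_span_singleton_self v)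
  have hsurj : Function.Surjective π := Ideal.Quotient.mk_surjective
  have hker : ∀ y : D, π y = 0 → ∃ k, y = v * k := by
    intro y hy
    have hy' : y ∈ Ideal.span {v} := Ideal.Quotient.eq_zero_iff_mem.mp hy
    obtain ⟨k, hk⟩ := Ideal.mem_span_singleton'.mp hy'
    exact ⟨k, by rw [← hk, mul_comm]⟩
  let J : Ideal D :=
    { carrier := {d | v * d ∈ I}
      add_mem' := fun ha hb => by simpa [mul_add] using I.add_mem ha hb
      zero_mem' := by simpa using I.zero_mem
      smul_mem' := fun r d hd => by
        simpa [smul_eq_mul, mul_left_comm] using I.mul_mem_left r hd }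
  obtain ⟨e, he, hse⟩ := H (I.map π)
  obtain ⟨f, hf, hsf⟩ := H (J.map π)
  obtain ⟨x, hxI, hxe⟩ := (Ideal.mem_map_iff_of_surjective π hsurj).mp
    (by rw [hse]; exact Ideal.mem_span_singleton_self e)
  obtain ⟨F, hFJ, hFf⟩ := (Ideal.mem_map_iff_of_surjective π hsurj).mp
    (by rw [hsf]; exact Ideal.mem_span_singleton_self f)
  have hvF : v * F ∈ I := hFJ
  obtain ⟨s, hs⟩ : ∃ s, x - x * x = v * s := by
    refine hker _ ?_
    have h1 : π (x - x * x) = e - e * e := by simp [map_sub, map_mul, hxe]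
    rw [h1, he, sub_self]
  set g : D := x * x + v * F * (1 - x) with hg
  have hgI : g ∈ I := I.add_mem (I.mul_mem_left x hxI) (I.mul_mem_right (1 - x) hvF)
  have hπg : π g = e := by
    rw [hg]; simp [map_add, map_mul, hxe, hπv, he]
  have key : ∀ h m : D, π h = e * π m → v * h ∈ Ideal.span {g} := by
    intro h m hm
    obtain ⟨k, hk⟩ : ∃ k, h - x * x * m = v * k := by
      refine hker _ ?_
      rw [map_sub, map_mul, map_mul, hxe, hm]
      linear_combination (-(π m)) * he
    have hgoal : v * h = g * (v * m) := by
      linear_combination v * hk - (v * m) * hg + (k - F * (1 - x) * m) * hv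
    rw [hgoal]
    exact Ideal.mul_mem_right _ _ (Ideal.mem_span_singleton_self g)
  have hIs : I = Ideal.span {g} := by
    apply le_antisymm
    · intro y hy
      obtain ⟨c, hc⟩ := Ideal.mem_span_singleton'.mp
        (by rw [← hse]; exact Ideal.mem_map_of_mem π hy)
      obtain ⟨z, hz⟩ := hsurj c
      obtain ⟨d, hd⟩ : ∃ d, y - g * z = v * d := by
        refine hker _ ?_
        rw [map_sub, map_mul, hπg, hz, ← hc]; ring
      have hdJ : d ∈ J := by
        show v * d ∈ I
        rw [← hd]; exact I.sub_mem hy (I.mul_mem_right z hgI)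
      obtain ⟨b', hb'⟩ := Ideal.mem_span_singleton'.mp
        (by rw [← hsf]; exact Ideal.mem_map_of_mem π hdJ)
      obtain ⟨b, hb⟩ := hsurj b'
      obtain ⟨k, hk⟩ : ∃ k, d - F * b = v * k := by
        refine hker _ ?_
        rw [map_sub, map_mul, hFf, hb, ← hb']; ring
      have h1 : v * (F * x * b) ∈ Ideal.span {g} := by
        refine key _ (F * b) ?_
        rw [map_mul, map_mul, map_mul, hFf, hxe, hb]; ring
      have h2 : v * (x * s * b) ∈ Ideal.span {g} := by
        refine key _ (s * b) ?_
        rw [map_mul, map_mul, map_mul, hxe]; ring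
      have h3 : v * (F * (1 - x) * b) ∈ Ideal.span {g} := by
        have hident : v * (F * (1 - x) * b) = g * ((1 - x) * b) - v * (x * s * b) := by
          linear_combination (-(1 - x) * b) * hg + (F * v * b - x * b) * hs + (s * F * b) * hv
        rw [hident]
        exact Ideal.sub_mem _ (Ideal.mul_mem_right _ _ (Ideal.mem_span_singleton_self g)) h2
      have hy' : y = g * z + (v * (F * x * b) + v * (F * (1 - x) * b)) := by
        linear_combination hd + v * hk + k * hv
      rw [hy']
      exact Ideal.add_mem _ (Ideal.mul_mem_right _ _ (Ideal.mem_span_singleton_self g))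
        (Ideal.add_mem _ h1 h3)
    · rw [Ideal.span_le, Set.singleton_subset_iff]; exact hgI
  exact ⟨⟨g, hIs⟩⟩

/-- Gluing `IdemSpan` along an idempotent decomposition. -/
theorem pglue {B : Type*} [CommRing B] (w : B) (hw : w * w = w)
    (H1 : IdemSpan (B ⧸ Ideal.span {w})) (H2 : IdemSpan (B ⧸ Ideal.span {1 - w})) :
    IdemSpan B := by
  intro I
  set π₁ := Ideal.Quotient.mk (Ideal.span {w}) with hπ₁def
  set π₂ := Ideal.Quotient.mk (Ideal.span {1 - w}) with hπ₂def
  have hπ₁w : π₁ w = 0 := Ideal.Quotient.eq_zero_iff_mem.mpr (Ideal.mem_span_singleton_self w)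
  have hπ₂w : π₂ (1 - w) = 0 :=
    Ideal.Quotient.eq_zero_iff_mem.mpr (Ideal.mem_span_singleton_self (1 - w))
  have hπ₂w' : π₂ w = 1 := by
    have := hπ₂w
    rw [map_sub, map_one, sub_eq_zero] at this
    exact this.symm
  have hs₁ : Function.Surjective π₁ := Ideal.Quotient.mk_surjective
  have hs₂ : Function.Surjective π₂ := Ideal.Quotient.mk_surjective
  have hinj : ∀ x : B, π₁ x = 0 → π₂ x = 0 → x = 0 := by
    intro x h1 h2
    obtain ⟨a, ha⟩ := Ideal.mem_span_singleton'.mp (Ideal.Quotient.eq_zero_iff_mem.mp h1)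
    obtain ⟨b, hb⟩ := Ideal.mem_span_singleton'.mp (Ideal.Quotient.eq_zero_iff_mem.mp h2)
    linear_combination (-(1 - w)) * ha + (-w) * hb + (-(a + b)) * hw
  obtain ⟨e₁, he₁, hse₁⟩ := H1 (I.map π₁)
  obtain ⟨e₂, he₂, hse₂⟩ := H2 (I.map π₂)
  obtain ⟨E₁, hE₁I, hE₁⟩ := (Ideal.mem_map_iff_of_surjective π₁ hs₁).mp
    (by rw [hse₁]; exact Ideal.mem_span_singleton_self e₁)
  obtain ⟨E₂, hE₂I, hE₂⟩ := (Ideal.mem_map_iff_of_surjective π₂ hs₂).mp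
    (by rw [hse₂]; exact Ideal.mem_span_singleton_self e₂)
  set e : B := E₁ * (1 - w) + E₂ * w with he
  have heI : e ∈ I := I.add_mem (I.mul_mem_right (1 - w) hE₁I) (I.mul_mem_right w hE₂I)
  have hπ₁e : π₁ e = e₁ := by
    rw [he]; rw [map_add, map_mul, map_mul, map_sub, map_one, hπ₁w, hE₁]; ring
  have hπ₂e : π₂ e = e₂ := by
    rw [he]; rw [map_add, map_mul, map_mul, map_sub, map_one, hπ₂w', hE₂]; ring
  refine ⟨e, ?_, ?_⟩
  · have z1 : π₁ (e * e - e) = 0 := by rw [map_sub, map_mul, hπ₁e, he₁, sub_self]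
    have z2 : π₂ (e * e - e) = 0 := by rw [map_sub, map_mul, hπ₂e, he₂, sub_self]
    have := hinj _ z1 z2
    linear_combination this
  · apply le_antisymm
    · intro y hy
      obtain ⟨c₁, hc₁⟩ := Ideal.mem_span_singleton'.mp
        (by rw [← hse₁]; exact Ideal.mem_map_of_mem π₁ hy)
      obtain ⟨c₂, hc₂⟩ := Ideal.mem_span_singleton'.mp
        (by rw [← hse₂]; exact Ideal.mem_map_of_mem π₂ hy)
      obtain ⟨Z₁, hZ₁⟩ := hs₁ c₁
      obtain ⟨Z₂, hZ₂⟩ := hs₂ c₂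
      set z : B := Z₁ * (1 - w) + Z₂ * w with hz
      have key : y = e * z := by
        have z1 : π₁ (y - e * z) = 0 := by
          rw [map_sub, map_mul, hπ₁e, hz, map_add, map_mul, map_mul, map_sub, map_one,
            hπ₁w, hZ₁, ← hc₁]
          ring
        have z2 : π₂ (y - e * z) = 0 := by
          rw [map_sub, map_mul, hπ₂e, hz, map_add, map_mul, map_mul, map_sub, map_one,
            hπ₂w', hZ₂, ← hc₂]
          ring
        have := hinj _ z1 z2
        linear_combination this
      rw [key]
      exact Ideal.mem_span_singleton.mpr ⟨z, rfl⟩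
    · rw [Ideal.span_le, Set.singleton_subset_iff]; exact heI

/-- If `S` is a surjective image of `(ZMod 2)[X]` killing `Xⁿ - 1` with `n` odd, then every
ideal of `S` is generated by an idempotent. -/
theorem idem_of_surj {S : Type*} [CommRing S] (n : ℕ) (hodd : Odd n)
    (ψ : Polynomial (ZMod 2) →+* S) (hsurj : Function.Surjective ψ)
    (hk : ψ (X ^ n - 1) = 0) : IdemSpan S := by
  classical
  intro I
  obtain ⟨h, hh0⟩ := (IsPrincipalIdealRing.principal (I.comap ψ)).principal
  have hh : I.comap ψ = Ideal.span {h} := hh0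
  have hmem : (X ^ n - 1 : Polynomial (ZMod 2)) ∈ I.comap ψ := by
    simp [Ideal.mem_comap, hk]
  rw [hh] at hmem
  obtain ⟨m, hm⟩ := Ideal.mem_span_singleton'.mp hmem
  -- hm : m * h = X ^ n - 1
  have hsf : Squarefree (X ^ n - 1 : Polynomial (ZMod 2)) := by
    have hn2 : ((n : ZMod 2)) ≠ 0 := by
      rw [Ne, ZMod.natCast_eq_zero_iff]
      exact fun hdvd => (Nat.not_even_iff_odd.mpr hodd) ((even_iff_two_dvd).mpr hdvd)
    have hsep := Polynomial.separable_X_pow_sub_C (F := ZMod 2) 1 hn2 one_ne_zero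
    have := hsep.squarefree
    simpa using this
  have hcop : IsCoprime h m := by
    have hU : IsUnit (gcd h m) := by
      refine hsf (gcd h m) ?_
      rw [← hm]
      exact mul_dvd_mul (gcd_dvd_right h m) (gcd_dvd_left h m)
    exact (gcd_isUnit_iff h m).mp hU
  obtain ⟨a, b, hab⟩ := hcop
  refine ⟨ψ (a * h), ?_, ?_⟩
  · have hq : a * h * (a * h) - a * h = (-(a * b)) * (X ^ n - 1) := by
      linear_combination (a * h) * hab + (-(a * b)) * hm
    have hq2 := congrArg ψ hq
    simp only [map_sub, map_mul, hk, mul_zero] at hq2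
    simp only [map_mul]
    linear_combination hq2
  · have hI : I = (I.comap ψ).map ψ := (Ideal.map_comap_of_surjective ψ hsurj I).symm
    rw [hI, hh, Ideal.map_span, Set.image_singleton]
    apply le_antisymm
    · rw [Ideal.span_le, Set.singleton_subset_iff]
      have hident : (h : Polynomial (ZMod 2)) = a * h * h + b * (X ^ n - 1) := by
        linear_combination (-h) * hab + b * hm
      have h2 := congrArg ψ hident
      simp only [map_add, map_mul, hk, mul_zero, add_zero] at h2
      rw [SetLike.mem_coe]
      refine Ideal.mem_span_singleton.mpr ⟨ψ h, ?_⟩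
      rw [map_mul]
      linear_combination h2
    · rw [Ideal.span_le, Set.singleton_subset_iff, SetLike.mem_coe, map_mul]
      exact Ideal.mul_mem_left _ _ (Ideal.mem_span_singleton_self (ψ h))

def mkR : Polynomial (ZMod 2) →+* R :=
  Ideal.Quotient.mk (Ideal.span ({X ^ 3 - X} : Set (Polynomial (ZMod 2))))

def φ₀ : ZMod 2 →+* R := mkR.comp C

theorem surj_comp {S : Type*} [CommRing S] (Φ : Polynomial R →+* S)
    (hΦ : Function.Surjective Φ) (c : ZMod 2)
    (h : Φ (C (mkR X)) = Φ (C (φ₀ c))) :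
    Function.Surjective (Φ.comp (mapRingHom φ₀)) := by
  have hkerc : ∀ p ∈ Ideal.span ({X ^ 3 - X} : Set (Polynomial (ZMod 2))),
      (evalRingHom c) p = 0 := by
    intro p hp
    obtain ⟨q, hq⟩ := Ideal.mem_span_singleton.mp hp
    rw [hq, map_mul]
    have hc : (evalRingHom c) (X ^ 3 - X) = 0 := by
      have hall : ∀ d : ZMod 2, d ^ 3 - d = 0 := by decide
      simp only [coe_evalRingHom, eval_sub, eval_pow, eval_X]
      exact hall c
    rw [hc, zero_mul]
  set ε : R →+* ZMod 2 := Ideal.Quotient.lift _ (evalRingHom c) hkerc with hε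
  have hmks : Function.Surjective mkR := Ideal.Quotient.mk_surjective
  have hfac : (Φ.comp (mapRingHom φ₀)).comp (mapRingHom ε) = Φ := by
    apply Polynomial.ringHom_ext
    · intro r
      obtain ⟨p, rfl⟩ := hmks r
      simp only [RingHom.comp_apply, coe_mapRingHom, map_C]
      have hεp : ε (mkR p) = eval c p := Ideal.Quotient.lift_mk _ _ _
      rw [hεp]
      obtain ⟨q, hq⟩ := (X_sub_C_dvd_sub_C_eval : X - C c ∣ p - C (eval c p))
      have hmkeq : mkR p = φ₀ (eval c p) + (mkR X - φ₀ c) * mkR q := by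
        have h2 := congrArg mkR hq
        simp only [map_sub, map_mul] at h2
        have hφ0 : φ₀ (eval c p) = mkR (C (eval c p)) := rfl
        have hφ0' : φ₀ c = mkR (C c) := rfl
        rw [hφ0, hφ0']
        linear_combination h2
      rw [hmkeq, map_add, map_mul, map_sub, map_add, map_mul, map_sub, h]
      ring
    · simp only [RingHom.comp_apply, coe_mapRingHom, map_X]
  intro y
  obtain ⟨p, hp⟩ := hΦ y
  refine ⟨Polynomial.map ε p, ?_⟩
  have hcc := congrArg (fun f : Polynomial R →+* S => f p) hfac
  simp only [RingHom.comp_apply, coe_mapRingHom] at hcc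
  simp only [RingHom.comp_apply, coe_mapRingHom]
  rw [hcc, hp]

theorem branch {T2 : Type*} [CommRing T2] (n : ℕ) (hodd : Odd n)
    (Φ : Polynomial R →+* T2) (hΦ : Function.Surjective Φ) (c : ZMod 2)
    (h : Φ (C (mkR X)) = Φ (C (φ₀ c)))
    (hXn : Φ (X ^ n - 1) = 0) : IdemSpan T2 := by
  refine idem_of_surj n hodd (Φ.comp (mapRingHom φ₀)) (surj_comp Φ hΦ c h) ?_
  rw [RingHom.comp_apply]
  have hmap : (mapRingHom φ₀) ((X : Polynomial (ZMod 2)) ^ n - 1)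
      = (X : Polynomial R) ^ n - 1 := by
    simp
  rw [hmap, hXn]

set_option maxHeartbeats 1000000 in
/-- Assembly step over an abstract surjective image `T` of `R[Y]` killing `Yⁿ - 1`. -/
theorem assemble (n : ℕ) (hodd : Odd n) {T : Type*} [CommRing T]
    (mkT : Polynomial R →+* T) (hTsurj : Function.Surjective mkT)
    (hXn : mkT (X ^ n - 1) = 0) : IsPrincipalIdealRing T := by
  classical
  set u : R := mkR X with hu
  have h2P : (2 : Polynomial (ZMod 2)) = 0 := by
    have h1 : (C (2 : ZMod 2)) = (2 : Polynomial (ZMod 2)) := map_ofNat C 2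
    rw [← h1, show (2 : ZMod 2) = 0 from rfl, map_zero]
  have h2R : (2 : R) = 0 := by
    rw [← map_ofNat mkR 2, h2P, map_zero]
  have hu3 : u * u * u - u = 0 := by
    have hX : mkR (X ^ 3 - X) = 0 :=
      Ideal.Quotient.eq_zero_iff_mem.mpr (Ideal.mem_span_singleton_self _)
    rw [map_sub, map_pow, ← hu] at hX
    linear_combination hX
  have hr : (u * u + u) * (u * u + u) = 0 := by
    linear_combination u * hu3 + (u * u * u + u * u) * h2R
  set v := mkT (C (u * u + u)) with hv_def
  have hv : v * v = 0 := by
    rw [hv_def, ← map_mul, ← C_mul, hr, C_0, map_zero]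
  apply main_pir v hv
  set mkB := Ideal.Quotient.mk (Ideal.span {v}) with hmkB
  set w := mkB (mkT (C u)) with hw_def
  have hbw : w * w = w := by
    have huu : u * u - u = u * u + u := by linear_combination (-u) * h2R
    have h1 : mkB (mkT (C (u * u - u))) = w * w - w := by
      rw [C_sub, C_mul, map_sub, map_mul, map_sub, map_mul, hw_def]
    have h2 : mkB (mkT (C (u * u - u))) = 0 := by
      rw [huu, ← hv_def]
      exact Ideal.Quotient.eq_zero_iff_mem.mpr (Ideal.mem_span_singleton_self v)
    have h3 : w * w - w = 0 := by rw [← h1, h2]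
    linear_combination h3
  apply pglue w hbw
  · refine branch n hodd ((Ideal.Quotient.mk (Ideal.span {w})).comp (mkB.comp mkT)) ?_ 0 ?_ ?_
    · simp only [RingHom.coe_comp]
      exact Ideal.Quotient.mk_surjective.comp
        (Ideal.Quotient.mk_surjective.comp hTsurj)
    · have hL : ((Ideal.Quotient.mk (Ideal.span {w})).comp (mkB.comp mkT)) (C (mkR X)) = 0 := by
        simp only [RingHom.comp_apply]
        rw [← hu, ← hw_def]
        exact Ideal.Quotient.eq_zero_iff_mem.mpr (Ideal.mem_span_singleton_self w)
      rw [hL]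
      have h0 : φ₀ 0 = 0 := map_zero φ₀
      rw [h0, C_0, map_zero]
    · simp only [RingHom.comp_apply]
      rw [hXn, map_zero, map_zero]
  · refine branch n hodd
      ((Ideal.Quotient.mk (Ideal.span {1 - w})).comp (mkB.comp mkT)) ?_ 1 ?_ ?_
    · simp only [RingHom.coe_comp]
      exact Ideal.Quotient.mk_surjective.comp
        (Ideal.Quotient.mk_surjective.comp hTsurj)
    · have hrhs : ((Ideal.Quotient.mk (Ideal.span {1 - w})).comp (mkB.comp mkT)) (C (φ₀ 1)) = 1 := by
        have h01 : φ₀ 1 = 1 := map_one φ₀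
        rw [h01, C_1, map_one]
      rw [hrhs]
      have h1w : (Ideal.Quotient.mk (Ideal.span {1 - w})) (1 - w) = 0 :=
        Ideal.Quotient.eq_zero_iff_mem.mpr (Ideal.mem_span_singleton_self _)
      rw [map_sub, map_one, sub_eq_zero] at h1w
      simp only [RingHom.comp_apply]
      rw [← hu, ← hw_def]
      exact h1w.symm
    · simp only [RingHom.comp_apply]
      rw [hXn, map_zero, map_zero]

set_option maxHeartbeats 1000000 in
/-- For odd `n`, every ideal of `R[Y] ⧸ ⟨Yⁿ - 1⟩` is principal. -/
theorem quotient_isPrincipalIdealRing (n : ℕ) (hodd : Odd n) (hpos : 0 < n) :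
    IsPrincipalIdealRing (Polynomial R ⧸ Ideal.span ({X ^ n - 1} : Set (Polynomial R))) := by
  refine assemble n hodd (T := Polynomial R ⧸ Ideal.span ({X ^ n - 1} : Set (Polynomial R)))
    (Ideal.Quotient.mk (Ideal.span ({X ^ n - 1} : Set (Polynomial R))))
    (Ideal.Quotient.mk_surjective (I := Ideal.span ({X ^ n - 1} : Set (Polynomial R)))) ?_
  exact Ideal.Quotient.eq_zero_iff_mem.mpr (Ideal.mem_span_singleton_self _)
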